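/- In a substitutional subshift on H = F^(N) (finitely supported functions N → F, F a finite group), the sets X_n defined by X_0 = A^H and X_{n+1} = ⋃_{f∈F} f_{@0} · τ̃(X_n) are H-invariant and nested (X_{n+1} ⊆ X_n). -/

import Mathlib

/-!
Substitutional subshifts on the locally finite group `H = F^(ℕ)` of finitely
supported functions `ℕ → F` (here written additively, `H = ℕ →₀ F`),
acting on `A^H` by the shift `(g • x) h = x (h + g)`.
We show the approximating sets `X₀ = A^H`, `X_{n+1} = ⋃_{f ∈ F} f_{@0} · τ̃(X_n)`
are `H`-invariant and nested.
-/

variable {F : Type*} [AddGroup F] [Fintype F] {A : Type*} [Fintype A]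

/-- The element `(f, h₀, h₁, …)` of `H = ℕ →₀ F`: value `f` at position `0`,
and `h` shifted up by one. -/
noncomputable def cons (f : F) (h : ℕ →₀ F) : ℕ →₀ F :=
  Finsupp.single 0 f + Finsupp.embDomain ⟨Nat.succ, Nat.succ_injective⟩ h

/-- The (non-deterministic) map `τ̃ : A^H → 𝒫(A^H)` induced by a substitution
`τ : A → 𝒫(A^F)`:  `x' ∈ τ̃(x)` iff for every `(f₁,f₂,…) ∈ H`, the tuple
`f₀ ↦ x'(f₀,f₁,f₂,…)` belongs to `τ(x(f₁,f₂,…))`. -/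
noncomputable def tildeTau (τ : A → Set (F → A)) (x : (ℕ →₀ F) → A) :
    Set ((ℕ →₀ F) → A) :=
  {y | ∀ h : ℕ →₀ F, (fun f : F => y (cons f h)) ∈ τ (x h)}

/-- `X₀ = A^H` and `X_{n+1} = ⋃_{f ∈ F} f_{@0} · τ̃(X_n)`, where `f_{@0}`
(the element of `H` supported at `0` with value `f`) acts by the shift. -/
noncomputable def subLevel (τ : A → Set (F → A)) : ℕ → Set ((ℕ →₀ F) → A)
  | 0 => Set.univ
  | n + 1 =>
      {z | ∃ f : F, ∃ x ∈ subLevel τ n, ∃ y ∈ tildeTau τ x,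
        z = fun h => y (h + Finsupp.single 0 f)}

/-- The embedding `Nat.succ : ℕ ↪ ℕ`. -/
def succEmb : ℕ ↪ ℕ := ⟨Nat.succ, Nat.succ_injective⟩

lemma cons_add_emb (f : F) (h g' : ℕ →₀ F) :
    cons f h + Finsupp.embDomain succEmb g' = cons f (h + g') := by
  unfold cons succEmb
  rw [add_assoc, ← Finsupp.embDomain_add]

lemma decompose (g : ℕ →₀ F) :
    ∃ c : F, ∃ g' : ℕ →₀ F,
      g = Finsupp.single 0 c + Finsupp.embDomain succEmb g' := by
  refine ⟨g 0, Finsupp.comapDomain Nat.succ g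
    (fun a _ b _ hab => Nat.succ_injective hab), ?_⟩
  ext n
  cases n with
  | zero =>
    rw [Finsupp.add_apply, Finsupp.single_apply]
    have : Finsupp.embDomain succEmb
        (Finsupp.comapDomain Nat.succ g
          (fun a _ b _ hab => Nat.succ_injective hab)) 0 = 0 := by
      apply Finsupp.embDomain_notin_range
      rintro ⟨a, ha⟩
      exact Nat.succ_ne_zero a ha
    simp [this]
  | succ m =>
    have h1 : Finsupp.embDomain succEmb
        (Finsupp.comapDomain Nat.succ g
          (fun a _ b _ hab => Nat.succ_injective hab)) (succEmb m)
        = g (Nat.succ m) := by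
      rw [Finsupp.embDomain_apply_self]; rfl
    have h2 : succEmb m = m + 1 := rfl
    rw [h2] at h1
    simp [Finsupp.add_apply, Finsupp.single_apply, h1]

lemma shift_tildeTau {τ : A → Set (F → A)} {x y : (ℕ →₀ F) → A}
    (g' : ℕ →₀ F) (hy : y ∈ tildeTau τ x) :
    (fun h => y (h + Finsupp.embDomain succEmb g')) ∈
      tildeTau τ (fun h => x (h + g')) := by
  intro h
  simpa only [cons_add_emb] using hy (h + g')

/-- The sets `X_n` are `H`-invariant and nested. -/
theorem subLevel_invariant_and_nested (τ : A → Set (F → A)) :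
    (∀ (n : ℕ) (g : ℕ →₀ F), ∀ x ∈ subLevel τ n,
        (fun h => x (h + g)) ∈ subLevel τ n) ∧
    (∀ n : ℕ, subLevel τ (n + 1) ⊆ subLevel τ n) := by
  constructor
  · intro n
    induction n with
    | zero => intro g x _; trivial
    | succ n ih =>
      rintro g z ⟨f, x, hx, y, hy, rfl⟩
      obtain ⟨c, g', hg'⟩ := decompose (F := F) (g + Finsupp.single 0 f)
      refine ⟨c, fun h => x (h + g'), ih g' x hx,
        fun h => y (h + Finsupp.embDomain succEmb g'), shift_tildeTau g' hy, ?_⟩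
      funext h
      simp only
      congr 1
      rw [add_assoc, hg', ← add_assoc]
  · intro n
    induction n with
    | zero => intro z _; trivial
    | succ n ih =>
      rintro z ⟨f, x, hx, y, hy, rfl⟩
      exact ⟨f, x, ih hx, y, hy, rfl⟩
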